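/- Let p ≥ 1, k ≥ 0, let x_1, …, x_ℓ be real numbers and A_1, …, A_ℓ positive semidefinite real symmetric p×p matrices, and define S_i := Σ_{j=1}^ℓ x_j^i A_j for 0 ≤ i ≤ 2k. Then the moment matrix M(k) = (S_{i+j−2})_{i,j=1}^{k+1} satisfies rank M(k) ≤ Σ_{j=1}^ℓ rank A_j. -/

import Mathlib

open Matrix

/-- The `k`-th truncated moment matrix of `S`: the `(i,j)`-th `p × p` block is
`S (i + j)` for `0 ≤ i, j ≤ k`. -/
def momentMatrix (p k : ℕ) (S : ℕ → Matrix (Fin p) (Fin p) ℝ) :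
    Matrix (Fin (k + 1) × Fin p) (Fin (k + 1) × Fin p) ℝ :=
  fun i j => S (i.1.1 + j.1.1) i.2 j.2

lemma matrix_rank_add_le {m n : Type*} [Fintype m] [Fintype n]
    (A B : Matrix m n ℝ) : (A + B).rank ≤ A.rank + B.rank := by
  rw [Matrix.rank, Matrix.rank, Matrix.rank, Matrix.mulVecLin_add]
  have h : LinearMap.range (A.mulVecLin + B.mulVecLin)
      ≤ LinearMap.range A.mulVecLin ⊔ LinearMap.range B.mulVecLin := by
    rintro _ ⟨v, rfl⟩
    exact Submodule.mem_sup.2 ⟨_, ⟨v, rfl⟩, _, ⟨v, rfl⟩, rfl⟩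
  exact le_trans (Submodule.finrank_mono h)
    (Submodule.finrank_add_le_finrank_add_finrank _ _)

lemma rank_sum_le {m n : Type*} [Fintype m] [Fintype n]
    {ι : Type*} (s : Finset ι) (M : ι → Matrix m n ℝ) :
    (∑ j ∈ s, M j).rank ≤ ∑ j ∈ s, (M j).rank := by
  classical
  induction s using Finset.induction with
  | empty => simp
  | insert _ _ h ih =>
    rw [Finset.sum_insert h, Finset.sum_insert h]
    exact le_trans (matrix_rank_add_le _ _) (by gcongr)

/-- The rank of the moment matrix of a finitely atomic positive matrix measure is at most
the sum of the ranks of its masses. -/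
theorem rank_momentMatrix_le_sum_rank (p k ℓ : ℕ) (hp : 1 ≤ p)
    (x : Fin ℓ → ℝ) (A : Fin ℓ → Matrix (Fin p) (Fin p) ℝ)
    (hA : ∀ j, (A j).PosSemidef) :
    (momentMatrix p k (fun i => ∑ j, x j ^ i • A j)).rank ≤ ∑ j, (A j).rank := by
  classical
  set P : Fin ℓ → Matrix (Fin (k + 1) × Fin p) (Fin p) ℝ :=
    fun j ia b => x j ^ (ia.1 : ℕ) * (if ia.2 = b then 1 else 0) with hP
  have hM : momentMatrix p k (fun i => ∑ j, x j ^ i • A j)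
      = ∑ j, P j * A j * (P j)ᵀ := by
    ext ia ib
    simp only [momentMatrix, Matrix.sum_apply, Matrix.smul_apply, smul_eq_mul,
      Matrix.mul_apply, Matrix.transpose_apply]
    simp only [hP]
    refine Finset.sum_congr rfl fun j _ => ?_
    simp only [mul_ite, ite_mul, mul_zero, zero_mul, mul_one, one_mul,
      Finset.sum_ite_eq, Finset.sum_ite_eq', Finset.mem_univ, if_true]
    rw [pow_add]; ring
  rw [hM]
  refine le_trans (rank_sum_le _ _) (Finset.sum_le_sum fun j _ => ?_)
  calc (P j * A j * (P j)ᵀ).rank ≤ (A j * (P j)ᵀ).rank := by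
        rw [Matrix.mul_assoc]; exact Matrix.rank_mul_le_right _ _
    _ ≤ (A j).rank := Matrix.rank_mul_le_left _ _
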